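/- Let V : [0,∞) → ℝ_{≥0} be differentiable with V'(t) ≤ -c·V(t)^{1-γ/2} whenever V(t) > 0, where c > 0 and γ ∈ (0,1). Then V(t) = 0 for all t ≥ T where T = V(0)^{γ/2}·2/(c·γ) (finite-time convergence with settling time depending on the initial condition). -/

import Mathlib

/-- Finite-time convergence: if the nonnegative, nonincreasing, differentiable
function `V` satisfies `V' t ≤ -c * V t ^ (1 - γ/2)` whenever `V t > 0`, with
`c > 0` and `γ ∈ (0,1)`, then `V t = 0` for all `t ≥ V 0 ^ (γ/2) * 2 / (c * γ)`. -/
theorem finite_time_convergence {c γ : ℝ} (hc : 0 < c) (hγ0 : 0 < γ) (hγ1 : γ < 1)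
    (V V' : ℝ → ℝ)
    (hderiv : ∀ t, 0 ≤ t → HasDerivAt V (V' t) t)
    (hnonneg : ∀ t, 0 ≤ t → 0 ≤ V t)
    (hmono : ∀ s t, 0 ≤ s → s ≤ t → V t ≤ V s)
    (hineq : ∀ t, 0 ≤ t → 0 < V t → V' t ≤ -c * V t ^ (1 - γ / 2)) :
    ∀ t, V 0 ^ (γ / 2) * 2 / (c * γ) ≤ t → V t = 0 := by
  intro t ht
  have hcγ : 0 < c * γ := mul_pos hc hγ0
  set T := V 0 ^ (γ / 2) * 2 / (c * γ) with hTdef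
  have hV0 : 0 ≤ V 0 := hnonneg 0 le_rfl
  have hT0 : 0 ≤ T := by
    apply div_nonneg _ hcγ.le
    have := Real.rpow_nonneg hV0 (γ / 2)
    linarith
  have ht0 : 0 ≤ t := hT0.trans ht
  by_cases hV00 : V 0 = 0
  · exact le_antisymm (by simpa [hV00] using hmono 0 t le_rfl ht0) (hnonneg t ht0)
  have hV0pos : 0 < V 0 := lt_of_le_of_ne hV0 (Ne.symm hV00)
  have hTpos : 0 < T := by
    apply div_pos _ hcγ
    have := Real.rpow_pos_of_pos hV0pos (γ / 2)
    linarith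
  have htpos : 0 < t := hTpos.trans_le ht
  by_contra hVt
  have hVtpos : 0 < V t := lt_of_le_of_ne (hnonneg t ht0) (Ne.symm hVt)
  have hpos : ∀ s ∈ Set.Icc (0 : ℝ) t, 0 < V s := fun s hs =>
    hVtpos.trans_le (hmono s t hs.1 hs.2)
  set g : ℝ → ℝ := fun s => V s ^ (γ / 2) + c * γ / 2 * s with hgdef
  have hg : ∀ s ∈ Set.Icc (0 : ℝ) t,
      HasDerivAt g (V' s * (γ / 2) * V s ^ (γ / 2 - 1) + c * γ / 2) s := by
    intro s hs
    have h1 := (hderiv s hs.1).rpow_const (p := γ / 2) (Or.inl (hpos s hs).ne')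
    have h2 : HasDerivAt (fun x : ℝ => c * γ / 2 * x) (c * γ / 2) s := by
      simpa using (hasDerivAt_id s).const_mul (c * γ / 2)
    exact h1.add h2
  have hanti : AntitoneOn g (Set.Icc 0 t) := by
    apply antitoneOn_of_deriv_nonpos (convex_Icc 0 t)
    · exact fun s hs => (hg s hs).continuousAt.continuousWithinAt
    · intro s hs
      rw [interior_Icc] at hs
      exact ((hg s (Set.mem_Icc_of_Ioo hs)).differentiableAt.differentiableWithinAt)
    · intro s hs
      rw [interior_Icc] at hs
      have hs' : s ∈ Set.Icc (0 : ℝ) t := Set.mem_Icc_of_Ioo hs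
      rw [(hg s hs').deriv]
      have hVs := hpos s hs'
      have hrp : (0:ℝ) < V s ^ (γ / 2 - 1) := Real.rpow_pos_of_pos hVs _
      have hV' := hineq s hs'.1 hVs
      have hkey : -c * V s ^ (1 - γ / 2) * (γ / 2) * V s ^ (γ / 2 - 1) = -(c * γ / 2) := by
        have : V s ^ (1 - γ / 2) * V s ^ (γ / 2 - 1) = 1 := by
          rw [← Real.rpow_add hVs]
          norm_num
        nlinarith [this]
      nlinarith [mul_le_mul_of_nonneg_right
        (mul_le_mul_of_nonneg_right hV' (by linarith : (0:ℝ) ≤ γ / 2)) hrp.le]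
  have hle : g t ≤ g 0 := hanti (Set.left_mem_Icc.mpr ht0) (Set.right_mem_Icc.mpr ht0) ht0
  have hTt : V 0 ^ (γ / 2) ≤ c * γ / 2 * t := by
    have : V 0 ^ (γ / 2) = c * γ / 2 * T * 2 / 2 := by
      rw [hTdef]
      field_simp
    nlinarith [mul_le_mul_of_nonneg_left ht (by linarith : (0:ℝ) ≤ c * γ / 2)]
  have hgt : (0:ℝ) < V t ^ (γ / 2) := Real.rpow_pos_of_pos hVtpos _
  have : g t = V t ^ (γ / 2) + c * γ / 2 * t := rfl
  have hg0 : g 0 = V 0 ^ (γ / 2) := by simp [hgdef]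
  rw [this, hg0] at hle
  linarith
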